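/- Let n ≥ 1, C₀ ≥ 1 and δ > 0. There exist constants C₁ ≥ 1 and C₁′ ≥ 1, depending only on n, C₀ and δ, with the following property: for every Borel measure μ on ℝⁿ satisfying μ(B) ≤ C₀·diam B for every closed ball B, and for every closed ball B = B(x₀, t₀) with μ(B) ≥ δ·t₀, there exist two closed balls B₁ and B₂ of radius (diam B)/(2C₁), centered at points of B, such that their centers are at distance at least 12·(diam B)/(2C₁) from each other and μ(B ∩ Bᵢ) ≥ (diam B)/(2C₁′) for i = 1, 2. -/

import Mathlib

open MeasureTheory Metric Set
open scoped ENNReal NNReal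


lemma diam_closedBall_eq {E : Type*} [NormedAddCommGroup E] [NormedSpace ℝ E] [Nontrivial E]
    (x : E) {r : ℝ} (hr : 0 ≤ r) : Metric.diam (Metric.closedBall x r) = 2 * r := by
  refine le_antisymm (Metric.diam_closedBall hr) ?_
  obtain ⟨v, hv⟩ := exists_ne (0 : E)
  set u : E := ‖v‖⁻¹ • v with hu_def
  have hu : ‖u‖ = 1 := norm_smul_inv_norm hv
  have h1 : x + r • u ∈ Metric.closedBall x r := by
    simp [Metric.mem_closedBall, dist_eq_norm, norm_smul, hu, abs_of_nonneg hr]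
  have h2 : x - r • u ∈ Metric.closedBall x r := by
    simp [Metric.mem_closedBall, dist_eq_norm, norm_smul, hu, abs_of_nonneg hr]
  have hle := Metric.dist_le_diam_of_mem (Metric.isBounded_closedBall) h1 h2
  have hd : dist (x + r • u) (x - r • u) = 2 * r := by
    rw [dist_eq_norm]
    have h3 : x + r • u - (x - r • u) = (2 * r) • u := by
      rw [two_mul, add_smul]; abel
    rw [h3, norm_smul, hu, mul_one, Real.norm_eq_abs, abs_of_nonneg (by linarith)]
  linarith [hd ▸ hle]

theorem statement5 (n : ℕ) (hn : 1 ≤ n) (C₀ δ : ℝ) (hC₀ : 1 ≤ C₀) (hδ : 0 < δ) :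
    ∃ C₁ C₁' : ℝ, 1 ≤ C₁ ∧ 1 ≤ C₁' ∧
      ∀ μ : Measure (EuclideanSpace ℝ (Fin n)),
        (∀ (x : EuclideanSpace ℝ (Fin n)) (r : ℝ),
          μ (Metric.closedBall x r) ≤
            ENNReal.ofReal (C₀ * Metric.diam (Metric.closedBall x r))) →
        ∀ (x₀ : EuclideanSpace ℝ (Fin n)) (t₀ : ℝ), 0 < t₀ →
          ENNReal.ofReal (δ * t₀) ≤ μ (Metric.closedBall x₀ t₀) →
          ∃ y₁ y₂ : EuclideanSpace ℝ (Fin n),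
            y₁ ∈ Metric.closedBall x₀ t₀ ∧ y₂ ∈ Metric.closedBall x₀ t₀ ∧
            12 * (Metric.diam (Metric.closedBall x₀ t₀) / (2 * C₁)) ≤ dist y₁ y₂ ∧
            ENNReal.ofReal (Metric.diam (Metric.closedBall x₀ t₀) / (2 * C₁')) ≤
              μ (Metric.closedBall x₀ t₀ ∩
                Metric.closedBall y₁ (Metric.diam (Metric.closedBall x₀ t₀) / (2 * C₁))) ∧
            ENNReal.ofReal (Metric.diam (Metric.closedBall x₀ t₀) / (2 * C₁')) ≤
              μ (Metric.closedBall x₀ t₀ ∩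
                Metric.closedBall y₂ (Metric.diam (Metric.closedBall x₀ t₀) / (2 * C₁))) := by
  classical
  haveI : Nontrivial (EuclideanSpace ℝ (Fin n)) := by
    refine nontrivial_of_ne (EuclideanSpace.single (⟨0, hn⟩ : Fin n) (1 : ℝ)) 0 ?_
    intro h
    have h0 := congrArg (fun v : EuclideanSpace ℝ (Fin n) => v (⟨0, hn⟩ : Fin n)) h
    simp [EuclideanSpace.single_apply] at h0
  set C₁ : ℝ := max 1 (52 * C₀ / δ) with hC₁def
  have hC₁1 : (1 : ℝ) ≤ C₁ := le_max_left _ _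
  have hC₁pos : (0 : ℝ) < C₁ := by linarith
  have hC₁big : 52 * C₀ / δ ≤ C₁ := le_max_right _ _
  obtain ⟨t, ht_sub, ht_cover⟩ :
      ∃ t : Finset (EuclideanSpace ℝ (Fin n)),
        (↑t ⊆ closedBall (0 : EuclideanSpace ℝ (Fin n)) 1) ∧
        closedBall (0 : EuclideanSpace ℝ (Fin n)) 1 ⊆ ⋃ z ∈ t, ball z (1 / C₁) := by
    obtain ⟨s, hs_sub, hs_fin, hs_cover⟩ :=
      (isCompact_closedBall (0 : EuclideanSpace ℝ (Fin n)) 1).finite_cover_balls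
        (e := 1 / C₁) (by positivity)
    refine ⟨hs_fin.toFinset, ?_, ?_⟩
    · intro z hz
      exact hs_sub (hs_fin.mem_toFinset.1 hz)
    · intro y hy
      obtain ⟨z, hz, hzy⟩ := mem_iUnion₂.1 (hs_cover hy)
      exact mem_iUnion₂.2 ⟨z, hs_fin.mem_toFinset.2 hz, hzy⟩
  set N := t.card with hN
  have hN1 : 1 ≤ N := by
    have h0 : (0 : EuclideanSpace ℝ (Fin n)) ∈ ⋃ z ∈ t, ball z (1 / C₁) :=
      ht_cover (mem_closedBall_self zero_le_one)
    obtain ⟨z, hz, -⟩ := mem_iUnion₂.1 h0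
    exact Finset.card_pos.2 ⟨z, hz⟩
  have hNpos : (0 : ℝ) < N := by exact_mod_cast hN1
  set C₁' : ℝ := max 1 (4 * N / δ) with hC₁'def
  have hC₁'1 : (1 : ℝ) ≤ C₁' := le_max_left _ _
  have hC₁'pos : (0 : ℝ) < C₁' := by linarith
  have hC₁'big : 4 * N / δ ≤ C₁' := le_max_right _ _
  refine ⟨C₁, C₁', hC₁1, hC₁'1, ?_⟩
  intro μ hμ x₀ t₀ ht₀ hden
  have hdiam : Metric.diam (Metric.closedBall x₀ t₀) = 2 * t₀ := _root_.diam_closedBall_eq x₀ ht₀.le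
  set r : ℝ := t₀ / C₁ with hrdef
  have hrpos : 0 < r := div_pos ht₀ hC₁pos
  have e1 : Metric.diam (Metric.closedBall x₀ t₀) / (2 * C₁) = r := by
    rw [hdiam, mul_div_mul_left _ _ (two_ne_zero)]
  have e2 : Metric.diam (Metric.closedBall x₀ t₀) / (2 * C₁') = t₀ / C₁' := by
    rw [hdiam, mul_div_mul_left _ _ (two_ne_zero)]
  rw [e1, e2]
  set B := Metric.closedBall x₀ t₀ with hB
  -- scaled centers
  set c : EuclideanSpace ℝ (Fin n) → EuclideanSpace ℝ (Fin n) := fun z => x₀ + t₀ • z with hc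
  have hc_mem : ∀ z ∈ t, c z ∈ B := by
    intro z hz
    have hz1 : z ∈ closedBall (0 : EuclideanSpace ℝ (Fin n)) 1 := ht_sub hz
    have : ‖z‖ ≤ 1 := by simpa [mem_closedBall, dist_zero_right] using hz1
    have : dist (c z) x₀ ≤ t₀ := by
      have : ‖t₀ • z‖ ≤ t₀ := by
        rw [norm_smul, Real.norm_eq_abs, abs_of_pos ht₀]
        nlinarith
      simpa [hc, dist_eq_norm] using this
    simpa [hB, mem_closedBall] using this
  have hcov : B ⊆ ⋃ z ∈ t, (B ∩ ball (c z) r) := by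
    intro y hy
    have hynorm : dist y x₀ ≤ t₀ := by simpa [hB, mem_closedBall] using hy
    have hw : t₀⁻¹ • (y - x₀) ∈ closedBall (0 : EuclideanSpace ℝ (Fin n)) 1 := by
      rw [mem_closedBall, dist_zero_right, norm_smul, Real.norm_eq_abs,
        abs_of_pos (inv_pos.2 ht₀)]
      rw [dist_eq_norm] at hynorm
      rw [inv_mul_le_iff₀ ht₀, mul_one]
      exact hynorm
    obtain ⟨z, hz, hzy⟩ := mem_iUnion₂.1 (ht_cover hw)
    refine mem_iUnion₂.2 ⟨z, hz, hy, ?_⟩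
    have hd : dist (t₀⁻¹ • (y - x₀)) z < 1 / C₁ := by simpa [mem_ball] using hzy
    have : dist y (c z) = t₀ * dist (t₀⁻¹ • (y - x₀)) z := by
      rw [dist_eq_norm, dist_eq_norm, ← norm_smul_of_nonneg ht₀.le]
      congr 1
      rw [smul_sub, smul_smul, mul_inv_cancel₀ ht₀.ne', one_smul]
      simp [hc]
      abel
    rw [mem_ball, this, hrdef]
    calc t₀ * dist (t₀⁻¹ • (y - x₀)) z < t₀ * (1 / C₁) := by
          exact mul_lt_mul_of_pos_left hd ht₀
      _ = t₀ / C₁ := by ring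
  -- the set of heavy points
  set S : Set (EuclideanSpace ℝ (Fin n)) :=
    {y | y ∈ B ∧ ENNReal.ofReal (t₀ / C₁') ≤ μ (B ∩ closedBall y r)} with hS
  -- key arithmetic facts
  have hδt : 0 < δ * t₀ := mul_pos hδ ht₀
  have harith1 : (N : ℝ) * (t₀ / C₁') ≤ δ * t₀ / 4 := by
    have h5 : 4 * (N : ℝ) ≤ δ * C₁' := by
      have := mul_le_mul_of_nonneg_left hC₁'big hδ.le
      have he : δ * (4 * (N : ℝ) / δ) = 4 * N := by field_simp
      linarith [he ▸ this]
    have : (N : ℝ) * (t₀ / C₁') = N * t₀ / C₁' := by ring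
    rw [this, div_le_div_iff₀ hC₁'pos (by norm_num : (0:ℝ) < 4)]
    nlinarith [mul_le_mul_of_nonneg_right h5 ht₀.le]
  have harith2 : C₀ * (2 * (13 * r)) ≤ δ * t₀ / 2 := by
    have h6 : 52 * C₀ ≤ δ * C₁ := by
      have := mul_le_mul_of_nonneg_left hC₁big hδ.le
      have he : δ * (52 * C₀ / δ) = 52 * C₀ := by field_simp
      linarith [he ▸ this]
    have : C₀ * (2 * (13 * r)) = 26 * C₀ * t₀ / C₁ := by rw [hrdef]; ring
    rw [this, div_le_div_iff₀ hC₁pos (by norm_num : (0:ℝ) < 2)]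
    nlinarith [mul_le_mul_of_nonneg_right h6 ht₀.le]
  -- bound a sum over a sub-finset of light centers
  have hsum : ∀ t' : Finset (EuclideanSpace ℝ (Fin n)), t' ⊆ t →
      (∀ z ∈ t', c z ∉ S) →
      ∑ z ∈ t', μ (B ∩ closedBall (c z) r) ≤ ENNReal.ofReal (δ * t₀ / 4) := by
    intro t' ht'sub hlight
    calc ∑ z ∈ t', μ (B ∩ closedBall (c z) r)
        ≤ ∑ _z ∈ t', ENNReal.ofReal (t₀ / C₁') := by
          refine Finset.sum_le_sum fun z hz => ?_
          have hz' := hlight z hz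
          rw [hS, Set.mem_setOf_eq, not_and] at hz'
          exact (lt_of_not_ge (hz' (hc_mem z (ht'sub hz)))).le
      _ = (t'.card : ℝ≥0∞) * ENNReal.ofReal (t₀ / C₁') := by
          rw [Finset.sum_const, nsmul_eq_mul]
      _ ≤ (N : ℝ≥0∞) * ENNReal.ofReal (t₀ / C₁') := by
          refine mul_le_mul_left ?_ _
          exact_mod_cast Finset.card_le_card ht'sub
      _ = ENNReal.ofReal ((N : ℝ) * (t₀ / C₁')) := by
          rw [ENNReal.ofReal_mul (Nat.cast_nonneg N), ENNReal.ofReal_natCast]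
      _ ≤ ENNReal.ofReal (δ * t₀ / 4) := ENNReal.ofReal_le_ofReal harith1
  -- final contradiction template
  have hcontr : ¬ (μ B ≤ ENNReal.ofReal (δ * t₀ / 2) + ENNReal.ofReal (δ * t₀ / 4)) := by
    intro hle
    rw [← ENNReal.ofReal_add (by positivity) (by positivity)] at hle
    have := le_trans hden hle
    rw [ENNReal.ofReal_le_ofReal_iff (by positivity)] at this
    linarith
  by_cases h1 : ∃ y, y ∈ S
  · obtain ⟨y₁, hy₁⟩ := h1
    by_cases h2 : ∃ y₂ ∈ S, 12 * r ≤ dist y₁ y₂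
    · obtain ⟨y₂, hy₂, hd12⟩ := h2
      exact ⟨y₁, y₂, hy₁.1, hy₂.1, hd12, hy₁.2, hy₂.2⟩
    · exfalso
      push_neg at h2
      apply hcontr
      -- cover B by the 13r ball around y₁ and light small balls
      set t' := t.filter (fun z => 12 * r ≤ dist y₁ (c z)) with ht'
      have hcov2 : B ⊆ closedBall y₁ (13 * r) ∪ ⋃ z ∈ t', (B ∩ ball (c z) r) := by
        intro y hy
        by_cases hcase : dist y y₁ ≤ 13 * r
        · exact Or.inl (mem_closedBall.2 hcase)
        · obtain ⟨z, hz, hyz⟩ := mem_iUnion₂.1 (hcov hy)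
          refine Or.inr (mem_iUnion₂.2 ⟨z, ?_, hyz⟩)
          rw [ht', Finset.mem_filter]
          refine ⟨hz, ?_⟩
          have hd1 : dist y (c z) < r := by
            have := hyz.2; simpa [mem_ball] using this
          push_neg at hcase
          have htri := dist_triangle y (c z) y₁
          have hcm : dist (c z) y₁ = dist y₁ (c z) := dist_comm _ _
          linarith
      calc μ B ≤ μ (closedBall y₁ (13 * r) ∪ ⋃ z ∈ t', (B ∩ ball (c z) r)) :=
            measure_mono hcov2
        _ ≤ μ (closedBall y₁ (13 * r)) + μ (⋃ z ∈ t', (B ∩ ball (c z) r)) :=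
            measure_union_le _ _
        _ ≤ μ (closedBall y₁ (13 * r)) + ∑ z ∈ t', μ (B ∩ ball (c z) r) :=
            add_le_add_right (measure_biUnion_finset_le _ _) _
        _ ≤ ENNReal.ofReal (δ * t₀ / 2) + ENNReal.ofReal (δ * t₀ / 4) := by
            refine add_le_add ?_ ?_
            · calc μ (closedBall y₁ (13 * r)) ≤
                  ENNReal.ofReal (C₀ * Metric.diam (closedBall y₁ (13 * r))) := hμ _ _
                _ ≤ ENNReal.ofReal (δ * t₀ / 2) := by
                    apply ENNReal.ofReal_le_ofReal
                    rw [_root_.diam_closedBall_eq y₁ (by positivity : (0:ℝ) ≤ 13 * r)]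
                    linarith [harith2]
            · calc ∑ z ∈ t', μ (B ∩ ball (c z) r)
                  ≤ ∑ z ∈ t', μ (B ∩ closedBall (c z) r) := by
                    refine Finset.sum_le_sum fun z hz => measure_mono ?_
                    exact inter_subset_inter_right _ ball_subset_closedBall
                _ ≤ ENNReal.ofReal (δ * t₀ / 4) := by
                    refine hsum t' (Finset.filter_subset _ _) fun z hz hzS => ?_
                    rw [ht', Finset.mem_filter] at hz
                    have := h2 (c z) hzS
                    linarith [hz.2]
  · exfalso
    push_neg at h1
    apply hcontr
    calc μ B ≤ μ (⋃ z ∈ t, (B ∩ ball (c z) r)) := measure_mono hcov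
      _ ≤ ∑ z ∈ t, μ (B ∩ ball (c z) r) := measure_biUnion_finset_le _ _
      _ ≤ ∑ z ∈ t, μ (B ∩ closedBall (c z) r) := by
          refine Finset.sum_le_sum fun z hz => measure_mono ?_
          exact inter_subset_inter_right _ ball_subset_closedBall
      _ ≤ ENNReal.ofReal (δ * t₀ / 4) := hsum t (le_refl t) fun z _ => h1 (c z)
      _ ≤ ENNReal.ofReal (δ * t₀ / 2) + ENNReal.ofReal (δ * t₀ / 4) := le_add_self
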